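/- Let S and S₀ be two distinct members of Σ. Then the projection of S onto S₀ has d_S-length at most C + 16δ; that is, for all x, y ∈ S, d_S(Pr(x,S₀), Pr(y,S₀)) ≤ C + 16δ, where C = 2ε + 12δ. -/

import Mathlib

open scoped ENNReal Classical
open Set

noncomputable section

variable {X : Type*} [MetricSpace X]

/-- `γ` is a geodesic segment from `x` to `y`, parametrized by arclength on `[0, dist x y]`. -/
def IsGeodesicFrom (γ : ℝ → X) (x y : X) : Prop :=
  γ 0 = x ∧ γ (dist x y) = y ∧
    ∀ s ∈ Set.Icc 0 (dist x y), ∀ t ∈ Set.Icc 0 (dist x y), dist (γ s) (γ t) = |s - t|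

/-- A geodesic metric space: any two points are joined by a geodesic segment. -/
def GeodesicSpace (X : Type*) [MetricSpace X] : Prop :=
  ∀ x y : X, ∃ γ : ℝ → X, IsGeodesicFrom γ x y

/-- Gromov hyperbolicity via the Rips thin-triangles condition: each side of a geodesic
triangle is contained in the `δ`-neighborhood of the union of the other two sides. -/
def DeltaHyperbolic (X : Type*) [MetricSpace X] (δ : ℝ) : Prop :=
  ∀ x y z : X, ∀ γ₁ γ₂ γ₃ : ℝ → X,
    IsGeodesicFrom γ₁ x y → IsGeodesicFrom γ₂ y z → IsGeodesicFrom γ₃ x z →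
    ∀ t ∈ Set.Icc 0 (dist x z),
      ∃ p ∈ (γ₁ '' Set.Icc 0 (dist x y)) ∪ (γ₂ '' Set.Icc 0 (dist y z)), dist (γ₃ t) p ≤ δ

/-- `S` is `ε`-quasiconvex: every geodesic segment with endpoints in `S` stays in the
closed `ε`-neighborhood of `S`. -/
def QuasiconvexSet (ε : ℝ) (S : Set X) : Prop :=
  ∀ x ∈ S, ∀ y ∈ S, ∀ γ : ℝ → X, IsGeodesicFrom γ x y →
    ∀ t ∈ Set.Icc 0 (dist x y), Metric.infDist (γ t) S ≤ ε

/-- `S` is geodesically convex: it contains every geodesic segment between its points. -/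
def GeodConvex (S : Set X) : Prop :=
  ∀ x ∈ S, ∀ y ∈ S, ∀ γ : ℝ → X, IsGeodesicFrom γ x y →
    ∀ t ∈ Set.Icc 0 (dist x y), γ t ∈ S

/-- The context hypotheses on the collection `Σ'` of subsets of `X`:
pairwise disjoint closed `ε`-quasiconvex sets, any two distinct members at distance `≥ R`. -/
structure SigmaSystem (Sig : Set (Set X)) (ε R : ℝ) : Prop where
  closed : ∀ S ∈ Sig, IsClosed S
  quasiconvex : ∀ S ∈ Sig, QuasiconvexSet ε S
  disjoint : ∀ S ∈ Sig, ∀ T ∈ Sig, S ≠ T → Disjoint S T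
  far : ∀ S ∈ Sig, ∀ T ∈ Sig, S ≠ T → ∀ x ∈ S, ∀ y ∈ T, R ≤ dist x y

/-- The underlying set of the space `X_S`: `X` with the interiors of all members of `Σ'`
removed. -/
def XSset (Sig : Set (Set X)) : Set X :=
  {x : X | ∀ S ∈ Sig, x ∉ interior S}

/-- The path metric `d_S` of `X_S`: infimum of lengths of paths in `X` avoiding the interiors
of all members of `Σ'` (`∞` if there is no such path). -/
def dS (Sig : Set (Set X)) (x y : X) : ℝ≥0∞ :=
  ⨅ (γ : ℝ → X) (b : ℝ) (_ : 0 ≤ b) (_ : ContinuousOn γ (Set.Icc 0 b))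
    (_ : γ 0 = x) (_ : γ b = y) (_ : ∀ t ∈ Set.Icc 0 b, γ t ∈ XSset Sig),
    eVariationOn γ (Set.Icc 0 b)

/-- The path pseudometric `d̂` of the quotient `X̂` of `X_S` in which all the points of any
one boundary component `∂S` (`S ∈ Σ'`) are identified: a chain may jump for free between two
points lying on the boundary of the same `S ∈ Σ'`. -/
def dHat (Sig : Set (Set X)) (x y : X) : ℝ≥0∞ :=
  ⨅ (n : ℕ) (a : Fin (n + 1) → X) (b : Fin (n + 1) → X) (_ : a 0 = x) (_ : b (Fin.last n) = y)
    (_ : ∀ i : Fin n, ∃ S ∈ Sig, b i.castSucc ∈ frontier S ∧ a i.succ ∈ frontier S),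
    ∑ i : Fin (n + 1), dS Sig (a i) (b i)

/-- The length (total variation) of the path `f` on the set `s`, measured with respect to an
arbitrary `ℝ≥0∞`-valued (pseudo)distance `ρ`. Used to measure lengths in `X̂`. -/
def varWith (ρ : X → X → ℝ≥0∞) (f : ℝ → X) (s : Set ℝ) : ℝ≥0∞ :=
  ⨆ p : ℕ × { u : ℕ → ℝ // Monotone u ∧ ∀ i, u i ∈ s },
    ∑ i ∈ Finset.range p.1, ρ (f (p.2.1 i)) (f (p.2.1 (i + 1)))

/-- The path `γ` (defined on `s`), or its image `γ̂` in `X̂`, *intersects* `S`: it meets the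
boundary of `S` and travels a nonzero `X`-distance in the interior of `S`. -/
def PathIntersects (γ : ℝ → X) (s : Set ℝ) (S : Set X) : Prop :=
  (∃ t ∈ s, γ t ∈ frontier S) ∧ 0 < eVariationOn γ {t ∈ s | γ t ∈ interior S}

/-- The image `γ̂` in `X̂` of the path `γ : [0,b] → X` is a `P`-quasigeodesic of `(X̂, d̂)`:
every subpath has `d̂`-length at most `P` times the `d̂`-distance between its endpoints,
plus `P`. -/
def HatQuasigeodesic (Sig : Set (Set X)) (P : ℝ) (γ : ℝ → X) (b : ℝ) : Prop :=
  0 ≤ b ∧ ContinuousOn γ (Set.Icc 0 b) ∧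
    ∀ s ∈ Set.Icc 0 b, ∀ t ∈ Set.Icc 0 b, s ≤ t →
      varWith (dHat Sig) γ (Set.Icc s t) ≤
        ENNReal.ofReal P * dHat Sig (γ s) (γ t) + ENNReal.ofReal P

/-- The image `α̂` in `X̂` of the path `α : [0,b] → X` is a geodesic of `(X̂, d̂)`: every
subpath realizes the `d̂`-distance between its endpoints. -/
def HatGeodesic (Sig : Set (Set X)) (α : ℝ → X) (b : ℝ) : Prop :=
  0 ≤ b ∧ ContinuousOn α (Set.Icc 0 b) ∧
    ∀ s ∈ Set.Icc 0 b, ∀ t ∈ Set.Icc 0 b, s ≤ t →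
      varWith (dHat Sig) α (Set.Icc s t) = dHat Sig (α s) (α t)

/-- The path `γ : [0,b] → X` is without backtracking: it never returns to a member of `Σ'`
after leaving it. -/
def NoBacktracking (Sig : Set (Set X)) (γ : ℝ → X) (b : ℝ) : Prop :=
  ∀ S ∈ Sig, ∀ s ∈ Set.Icc 0 b, ∀ t ∈ Set.Icc 0 b, ∀ u ∈ Set.Icc 0 b,
    s ≤ t → t ≤ u → γ s ∈ S → γ u ∈ S → γ t ∈ S

end


lemma IsGeodesicFrom.reverse' {X : Type*} [MetricSpace X] {γ : ℝ → X} {a b : X}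
    (h : IsGeodesicFrom γ a b) : IsGeodesicFrom (fun s => γ (dist a b - s)) b a := by
  obtain ⟨h0, h1, hd⟩ := h
  refine ⟨by simpa using h1, by simp [dist_comm b a, h0], ?_⟩
  intro s hs t ht
  rw [dist_comm b a] at hs ht
  rw [hd (dist a b - s) ⟨by linarith [hs.2], by linarith [hs.1]⟩
      (dist a b - t) ⟨by linarith [ht.2], by linarith [ht.1]⟩]
  rw [show dist a b - s - (dist a b - t) = t - s by ring, abs_sub_comm]

lemma not_interior_of_proj' {X : Type*} [MetricSpace X] (hgeo : GeodesicSpace X)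
    {S₀ : Set X} {z w : X} (hw : w ∈ S₀) (hzd : dist z w = Metric.infDist z S₀)
    (hz : 0 < dist z w) : w ∉ interior S₀ := by
  intro hint
  obtain ⟨γ, h0, h1, hd⟩ := hgeo z w
  obtain ⟨r, hr, hball⟩ := Metric.isOpen_iff.1 isOpen_interior w hint
  obtain ⟨m, hm0, hmr, hmD⟩ : ∃ m : ℝ, 0 < m ∧ m < r ∧ m ≤ dist z w :=
    ⟨min (r/2) (dist z w / 2), lt_min (by linarith) (by linarith),
      lt_of_le_of_lt (min_le_left _ _) (by linarith),
      le_trans (min_le_right _ _) (by linarith)⟩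
  have htI : dist z w - m ∈ Set.Icc 0 (dist z w) := ⟨by linarith, by linarith⟩
  have hdist : dist (γ (dist z w - m)) w = m := by
    have h2 := hd (dist z w - m) htI (dist z w) ⟨le_of_lt hz, le_refl _⟩
    rw [h1] at h2
    rw [h2, show dist z w - m - dist z w = -m by ring, abs_neg, abs_of_pos hm0]
  have hmem : γ (dist z w - m) ∈ S₀ := interior_subset (hball (by
    rw [Metric.mem_ball, hdist]; exact hmr))
  have h3 : Metric.infDist z S₀ ≤ dist z (γ (dist z w - m)) :=
    Metric.infDist_le_dist_of_mem hmem
  have hzt : dist z (γ (dist z w - m)) = dist z w - m := by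
    have h4 := hd 0 ⟨le_refl 0, le_of_lt hz⟩ (dist z w - m) htI
    rw [h0] at h4
    rw [h4, abs_sub_comm, sub_zero, abs_of_nonneg htI.1]
  rw [← hzd, hzt] at h3
  linarith

/-- projection between members of `Σ'`. If `S` and `S₀` are distinct
members of `Σ'`, then the projection of `S` onto `S₀` has `d_S`-length at most `C + 16δ`:
for all `x, y ∈ S` with nearest-point projections `px, py` onto `S₀`,
`d_S(px, py) ≤ C + 16δ`, where `C = 2ε + 12δ`. -/
theorem projection_of_member_bounded
    {X : Type*} [MetricSpace X] [CompleteSpace X] [LocallyCompactSpace X]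
    (hgeo : GeodesicSpace X) (δ ε R : ℝ) (hδ : 0 ≤ δ) (hε : 0 ≤ ε)
    (hhyp : DeltaHyperbolic X δ) (Sig : Set (Set X)) (hSig : SigmaSystem Sig ε R)
    (hconv : ∀ S ∈ Sig, GeodConvex S) (hR : 24 * δ + 4 * ε < R)
    (S S₀ : Set X) (hS : S ∈ Sig) (hS₀ : S₀ ∈ Sig) (hne : S ≠ S₀)
    (x y : X) (hx : x ∈ S) (hy : y ∈ S)
    (px py : X)
    (hpx : px ∈ S₀) (hpxd : dist x px = Metric.infDist x S₀)
    (hpy : py ∈ S₀) (hpyd : dist y py = Metric.infDist y S₀) :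
    dS Sig px py ≤ ENNReal.ofReal ((2 * ε + 12 * δ) + 16 * δ) := by
  have hR0 : (0:ℝ) < R := lt_of_le_of_lt (by positivity) hR
  have hRx : R ≤ dist x px := hSig.far S hS S₀ hS₀ hne x hx px hpx
  have hRy : R ≤ dist y py := hSig.far S hS S₀ hS₀ hne y hy py hpy
  have hL0 : (0:ℝ) ≤ dist px py := dist_nonneg
  obtain ⟨β, hβ⟩ := hgeo px py
  have hmIcc : dist px py / 2 ∈ Set.Icc 0 (dist px py) := ⟨by linarith, by linarith⟩
  have hmS0 : β (dist px py / 2) ∈ S₀ :=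
    hconv S₀ hS₀ px hpx py hpy β hβ _ hmIcc
  have hmpx : dist (β (dist px py / 2)) px = dist px py / 2 := by
    have h5 := hβ.2.2 (dist px py / 2) hmIcc 0 ⟨le_refl 0, hL0⟩
    rw [hβ.1] at h5
    rw [h5, sub_zero, abs_of_nonneg (by linarith)]
  have hmpy : dist (β (dist px py / 2)) py = dist px py / 2 := by
    have h5 := hβ.2.2 (dist px py / 2) hmIcc (dist px py) ⟨hL0, le_refl _⟩
    rw [hβ.2.1] at h5
    rw [h5, show dist px py / 2 - dist px py = -(dist px py / 2) by ring,
      abs_neg, abs_of_nonneg (by linarith)]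
  -- Claim A : the two projections are 8δ-close in X
  have hL : dist px py ≤ 8 * δ := by
    obtain ⟨γ1, hγ1⟩ := hgeo px x
    obtain ⟨γ2, hγ2⟩ := hgeo x py
    obtain ⟨p, hp, hpd⟩ := hhyp px x py γ1 γ2 β hγ1 hγ2 hβ (dist px py / 2) hmIcc
    rcases hp with hp | hp
    · obtain ⟨s, hsI, rfl⟩ := hp
      have hpx2 : dist (γ1 s) x = dist px x - s := by
        have h5 := hγ1.2.2 s hsI (dist px x) ⟨dist_nonneg, le_refl _⟩
        rw [hγ1.2.1] at h5
        rw [h5, abs_of_nonpos (by linarith [hsI.2]), neg_sub]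
      have hppx : dist (γ1 s) px = s := by
        have h5 := hγ1.2.2 s hsI 0 ⟨le_refl 0, dist_nonneg⟩
        rw [hγ1.1] at h5
        rw [h5, sub_zero, abs_of_nonneg hsI.1]
      have hinf : dist x px ≤ dist x (β (dist px py / 2)) := by
        rw [hpxd]; exact Metric.infDist_le_dist_of_mem hmS0
      linarith [dist_triangle x (γ1 s) (β (dist px py / 2)),
        dist_triangle (β (dist px py / 2)) (γ1 s) px,
        dist_comm x (γ1 s), dist_comm px x,
        dist_comm (γ1 s) (β (dist px py / 2)), hmpx, hpd, hδ]
    · obtain ⟨s, hsI, rfl⟩ := hp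
      obtain ⟨γ5, hγ5⟩ := hgeo x y
      obtain ⟨γ4, hγ4⟩ := hgeo y py
      obtain ⟨q, hq, hqd⟩ := hhyp x y py γ5 γ4 γ2 hγ5 hγ4 hγ2 s hsI
      rcases hq with hq | hq
      · exfalso
        obtain ⟨s2, hs2, rfl⟩ := hq
        have hqS : γ5 s2 ∈ S := hconv S hS x hx y hy γ5 hγ5 s2 hs2
        have hfar2 : R ≤ dist (γ5 s2) (β (dist px py / 2)) :=
          hSig.far S hS S₀ hS₀ hne _ hqS _ hmS0
        linarith [dist_triangle (γ5 s2) (γ2 s) (β (dist px py / 2)),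
          dist_comm (γ2 s) (γ5 s2), dist_comm (β (dist px py / 2)) (γ2 s),
          hqd, hpd, hδ, hε]
      · obtain ⟨s2, hs2, rfl⟩ := hq
        have hyq : dist y (γ4 s2) = s2 := by
          have h5 := hγ4.2.2 0 ⟨le_refl 0, dist_nonneg⟩ s2 hs2
          rw [hγ4.1] at h5
          rw [h5, zero_sub, abs_neg, abs_of_nonneg hs2.1]
        have hqpy : dist (γ4 s2) py = dist y py - s2 := by
          have h5 := hγ4.2.2 s2 hs2 (dist y py) ⟨dist_nonneg, le_refl _⟩
          rw [hγ4.2.1] at h5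
          rw [h5, abs_of_nonpos (by linarith [hs2.2]), neg_sub]
        have hinfy : dist y py ≤ dist y (β (dist px py / 2)) := by
          rw [hpyd]; exact Metric.infDist_le_dist_of_mem hmS0
        linarith [dist_triangle4 y (γ4 s2) (γ2 s) (β (dist px py / 2)),
          dist_triangle4 (β (dist px py / 2)) (γ2 s) (γ4 s2) py,
          dist_comm (γ2 s) (γ4 s2), dist_comm (β (dist px py / 2)) (γ2 s),
          hyq, hqpy, hinfy, hmpy, hpd, hqd, hδ]
  -- px is not in the interior of any member
  have hXSpx : ∀ T ∈ Sig, px ∉ interior T := by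
    intro T hT hint
    by_cases hTS : T = S₀
    · subst hTS
      exact not_interior_of_proj' hgeo hpx hpxd (by linarith) hint
    · have hmemT : px ∈ T := interior_subset hint
      have h6 := hSig.far T hT S₀ hS₀ hTS px hmemT px hpx
      rw [dist_self] at h6; linarith
  rcases hδ.eq_or_lt with hδ0 | hδpos
  · -- δ = 0 : the projections coincide, use the constant path
    have hpxy : px = py := dist_le_zero.mp (by linarith)
    calc dS Sig px py ≤ eVariationOn (fun _ : ℝ => px) (Set.Icc 0 0) :=
          iInf_le_of_le (fun _ => px) <| iInf_le_of_le (0:ℝ) <|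
          iInf_le_of_le (le_refl (0:ℝ)) <| iInf_le_of_le continuousOn_const <|
          iInf_le_of_le rfl <| iInf_le_of_le hpxy <|
          iInf_le_of_le (fun t _ => hXSpx) (le_refl _)
      _ = 0 := by
          rw [Set.Icc_self]
          exact eVariationOn.subsingleton _ Set.subsingleton_singleton
      _ ≤ _ := zero_le
  · -- δ > 0 : construct an explicit detour path
    obtain ⟨γx, hγx⟩ := hgeo x px
    have hγ3 : IsGeodesicFrom (fun s => γx (dist x px - s)) px x := hγx.reverse'
    set γ3 : ℝ → X := fun s => γx (dist x px - s) with hγ3def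
    have h8D : 8 * δ ≤ dist px x := by rw [dist_comm]; linarith
    have huIcc : (8*δ) ∈ Set.Icc 0 (dist px x) := ⟨by linarith, h8D⟩
    set u := γ3 (8*δ) with hudef
    have hupx : dist u px = 8*δ := by
      rw [hudef]
      have h5 := hγ3.2.2 (8*δ) huIcc 0 ⟨le_refl 0, dist_nonneg⟩
      rw [hγ3.1] at h5
      rw [h5, sub_zero, abs_of_nonneg (by linarith)]
    have hux : dist x u = dist x px - 8*δ := by
      have hI : dist x px - 8*δ ∈ Set.Icc 0 (dist x px) := ⟨by linarith, by linarith⟩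
      have h5 := hγx.2.2 0 ⟨le_refl 0, dist_nonneg⟩ (dist x px - 8*δ) hI
      rw [hγx.1] at h5
      rw [hudef]
      simp only [hγ3def]
      rw [h5, zero_sub, abs_neg, abs_of_nonneg hI.1]
    have hu_far : ∀ z ∈ S₀, 8*δ ≤ dist u z := by
      intro z hz
      have h1 : dist x px ≤ dist x z := by
        rw [hpxd]; exact Metric.infDist_le_dist_of_mem hz
      linarith [dist_triangle x u z, hux]
    obtain ⟨γb, hγb⟩ := hgeo py x
    obtain ⟨p, hp, hpd⟩ := hhyp px py x β γb γ3 hβ hγb hγ3 (8*δ) huIcc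
    rw [← hudef] at hpd
    rcases hp with hp | hp
    · exfalso
      obtain ⟨s, hsI, rfl⟩ := hp
      have hpS0 : β s ∈ S₀ := hconv S₀ hS₀ px hpx py hpy β hβ s hsI
      linarith [hu_far (β s) hpS0, hpd]
    obtain ⟨s, hsI, rfl⟩ := hp
    obtain ⟨γc, hγc⟩ := hgeo py y
    obtain ⟨γd, hγd⟩ := hgeo y x
    obtain ⟨q, hq, hqd⟩ := hhyp py y x γc γd γb hγc hγd hγb s hsI
    rcases hq with hq | hq
    swap
    · exfalso
      obtain ⟨s2, hs2, rfl⟩ := hq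
      have hqS : γd s2 ∈ S := hconv S hS y hy x hx γd hγd s2 hs2
      have hfar2 : R ≤ dist (γd s2) px := hSig.far S hS S₀ hS₀ hne _ hqS px hpx
      linarith [dist_triangle4 (γd s2) (γb s) u px,
        dist_comm (γb s) (γd s2), dist_comm u (γb s), hqd, hpd, hupx]
    obtain ⟨s', hs'I, rfl⟩ := hq
    set v := γc s' with hvdef
    have hpyv : dist py v = s' := by
      have h5 := hγc.2.2 0 ⟨le_refl 0, dist_nonneg⟩ s' hs'I
      rw [hγc.1] at h5
      rw [hvdef, h5, zero_sub, abs_neg, abs_of_nonneg hs'I.1]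
    have hds' : s' ≤ 18*δ := by
      linarith [dist_triangle4 py u (γb s) v, dist_triangle py px u,
        dist_comm py px, dist_comm px u, hpyv, hL, hupx, hpd, hqd]
    have hduv : dist u v ≤ 2*δ := by
      linarith [dist_triangle u (γb s) v, hpd, hqd]
    have hduv0 : (0:ℝ) ≤ dist u v := dist_nonneg
    obtain ⟨μ, hμ⟩ := hgeo u v
    set c2 : ℝ := 8*δ + dist u v with hc2def
    set B : ℝ := 8*δ + dist u v + s' with hBdef
    have hs'0 : (0:ℝ) ≤ s' := hs'I.1
    have hc1c2 : 8*δ ≤ c2 := by linarith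
    have hc2B : c2 ≤ B := by linarith
    have hB0 : (0:ℝ) ≤ B := by linarith
    set π : ℝ → X :=
      fun t => if t ≤ 8*δ then γ3 t else if t ≤ c2 then μ (t - 8*δ)
        else γc (s' - (t - c2)) with hπdef
    have hπ1 : ∀ a ∈ Set.Icc (0:ℝ) (8*δ), π a = γ3 a := by
      intro a ha
      simp only [hπdef]
      rw [if_pos ha.2]
    have hπ2 : ∀ a ∈ Set.Icc (8*δ) c2, π a = μ (a - 8*δ) := by
      intro a ha
      by_cases h : a ≤ 8*δ
      · have ha8 : a = 8*δ := le_antisymm h ha.1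
        simp only [hπdef]
        rw [if_pos h, ha8, sub_self, hμ.1, hudef]
      · simp only [hπdef]
        rw [if_neg h, if_pos ha.2]
    have hπ3 : ∀ a ∈ Set.Icc c2 B, π a = γc (s' - (a - c2)) := by
      intro a ha
      by_cases h1 : a ≤ 8*δ
      · have huv : u = v := dist_eq_zero.mp
          (le_antisymm (by linarith [ha.1]) dist_nonneg)
        have ha8 : a = 8*δ := le_antisymm h1 (by linarith [ha.1])
        simp only [hπdef]
        rw [if_pos h1, show s' - (a - c2) = s' by linarith [ha.1]]
        rw [ha8, ← hudef, ← hvdef]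
        exact huv
      · by_cases h2 : a ≤ c2
        · have hac2 : a = c2 := le_antisymm h2 ha.1
          simp only [hπdef]
          rw [if_neg h1, if_pos h2,
            show a - 8*δ = dist u v by rw [hac2, hc2def]; ring, hμ.2.1,
            show s' - (a - c2) = s' by rw [hac2]; ring, hvdef]
        · simp only [hπdef]
          rw [if_neg h1, if_neg h2]
    have hd1 : ∀ a ∈ Set.Icc (0:ℝ) (8*δ), ∀ b ∈ Set.Icc (0:ℝ) (8*δ),
        dist (π a) (π b) = |a - b| := by
      intro a ha b hb
      rw [hπ1 a ha, hπ1 b hb]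
      exact hγ3.2.2 a ⟨ha.1, ha.2.trans h8D⟩ b ⟨hb.1, hb.2.trans h8D⟩
    have hd2 : ∀ a ∈ Set.Icc (8*δ) c2, ∀ b ∈ Set.Icc (8*δ) c2,
        dist (π a) (π b) = |a - b| := by
      intro a ha b hb
      rw [hπ2 a ha, hπ2 b hb,
        hμ.2.2 (a - 8*δ) ⟨by linarith [ha.1], by linarith [ha.2]⟩
          (b - 8*δ) ⟨by linarith [hb.1], by linarith [hb.2]⟩,
        show a - 8*δ - (b - 8*δ) = a - b by ring]
    have hσmem : ∀ t ∈ Set.Icc c2 B, s' - (t - c2) ∈ Set.Icc 0 (dist py y) :=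
      fun t ht => ⟨by linarith [ht.2], le_trans (by linarith [ht.1]) hs'I.2⟩
    have hd3 : ∀ a ∈ Set.Icc c2 B, ∀ b ∈ Set.Icc c2 B,
        dist (π a) (π b) = |a - b| := by
      intro a ha b hb
      rw [hπ3 a ha, hπ3 b hb, hγc.2.2 _ (hσmem a ha) _ (hσmem b hb),
        show s' - (a - c2) - (s' - (b - c2)) = b - a by ring, abs_sub_comm]
    have habs : ∀ p q : ℝ, p ≤ q → |p - q| = q - p := fun p q h => by
      rw [abs_sub_comm, abs_of_nonneg (by linarith)]
    have hc1mem : (8*δ) ∈ Set.Icc (0:ℝ) (8*δ) := ⟨by linarith, le_refl _⟩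
    have hc1mem2 : (8*δ) ∈ Set.Icc (8*δ) c2 := ⟨le_refl _, hc1c2⟩
    have hc2mem2 : c2 ∈ Set.Icc (8*δ) c2 := ⟨hc1c2, le_refl _⟩
    have hc2mem3 : c2 ∈ Set.Icc c2 B := ⟨le_refl _, hc2B⟩
    have hlip : ∀ a ∈ Set.Icc (0:ℝ) B, ∀ b ∈ Set.Icc (0:ℝ) B, a ≤ b →
        dist (π a) (π b) ≤ b - a := by
      intro a ha b hb hab
      by_cases hb1 : b ≤ 8*δ
      · rw [hd1 a ⟨ha.1, hab.trans hb1⟩ b ⟨hb.1, hb1⟩, habs a b hab]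
      · by_cases hb2 : b ≤ c2
        · by_cases ha1 : a ≤ 8*δ
          · calc dist (π a) (π b) ≤ dist (π a) (π (8*δ)) + dist (π (8*δ)) (π b) :=
                dist_triangle _ _ _
              _ = (8*δ - a) + (b - 8*δ) := by
                  rw [hd1 a ⟨ha.1, ha1⟩ _ hc1mem,
                    hd2 _ hc1mem2 b ⟨le_of_not_ge hb1, hb2⟩,
                    habs a _ ha1, habs _ b (le_of_not_ge hb1)]
              _ = b - a := by ring
          · rw [hd2 a ⟨le_of_not_ge ha1, hab.trans hb2⟩
              b ⟨le_of_not_ge hb1, hb2⟩, habs a b hab]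
        · by_cases ha1 : a ≤ 8*δ
          · calc dist (π a) (π b)
                ≤ dist (π a) (π (8*δ)) + dist (π (8*δ)) (π c2) + dist (π c2) (π b) :=
                dist_triangle4 _ _ _ _
              _ = (8*δ - a) + (c2 - 8*δ) + (b - c2) := by
                  rw [hd1 a ⟨ha.1, ha1⟩ _ hc1mem, hd2 _ hc1mem2 _ hc2mem2,
                    hd3 _ hc2mem3 b ⟨le_of_not_ge hb2, hb.2⟩,
                    habs a _ ha1, habs _ _ hc1c2, habs _ b (le_of_not_ge hb2)]
              _ = b - a := by ring
          · by_cases ha2 : a ≤ c2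
            · calc dist (π a) (π b) ≤ dist (π a) (π c2) + dist (π c2) (π b) :=
                  dist_triangle _ _ _
                _ = (c2 - a) + (b - c2) := by
                    rw [hd2 a ⟨le_of_not_ge ha1, ha2⟩ _ hc2mem2,
                      hd3 _ hc2mem3 b ⟨le_of_not_ge hb2, hb.2⟩,
                      habs a _ ha2, habs _ b (le_of_not_ge hb2)]
                _ = b - a := by ring
            · rw [hd3 a ⟨le_of_not_ge ha2, ha.2⟩ b ⟨le_of_not_ge hb2, hb.2⟩,
                habs a b hab]
    have hlipOn : LipschitzOnWith 1 π (Set.Icc 0 B) := by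
      apply LipschitzOnWith.of_dist_le_mul
      intro a ha b hb
      rcases le_total a b with h | h
      · rw [NNReal.coe_one, one_mul, Real.dist_eq, habs a b h]
        exact hlip a ha b hb h
      · rw [NNReal.coe_one, one_mul, Real.dist_eq, dist_comm (π a) (π b),
          abs_sub_comm, habs b a h]
        exact hlip b hb a ha h
    have hmemXS : ∀ t ∈ Set.Icc (0:ℝ) B, π t ∈ XSset Sig := by
      intro t ht T hT hint
      by_cases ht1 : t ≤ 8*δ
      · have hπt : π t = γ3 t := hπ1 t ⟨ht.1, ht1⟩
        by_cases hTS : T = S₀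
        · subst hTS
          rcases eq_or_lt_of_le ht.1 with h0 | h0
          · have hpt : π t = px := by rw [hπt, ← h0, hγ3.1]
            exact not_interior_of_proj' hgeo hpx hpxd (by linarith)
              (by rwa [hpt] at hint)
          · have hmemS0 : π t ∈ T := interior_subset hint
            have hI : dist x px - t ∈ Set.Icc 0 (dist x px) :=
              ⟨by linarith, by linarith⟩
            have hxt : dist x (π t) = dist x px - t := by
              have h5 := hγx.2.2 0 ⟨le_refl 0, dist_nonneg⟩ (dist x px - t) hI
              rw [hγx.1] at h5
              rw [hπt]
              simp only [hγ3def]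
              rw [h5, zero_sub, abs_neg, abs_of_nonneg hI.1]
            have h6 : Metric.infDist x T ≤ dist x (π t) :=
              Metric.infDist_le_dist_of_mem hmemS0
            rw [← hpxd] at h6
            linarith
        · have hmemT : π t ∈ T := interior_subset hint
          have hfar3 : R ≤ dist (π t) px := hSig.far T hT S₀ hS₀ hTS _ hmemT px hpx
          have hpt : dist (π t) px = t := by
            rw [hπt]
            have h5 := hγ3.2.2 t ⟨ht.1, ht1.trans h8D⟩ 0 ⟨le_refl 0, dist_nonneg⟩
            rw [hγ3.1] at h5
            rw [h5, sub_zero, abs_of_nonneg ht.1]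
          linarith
      · by_cases ht2 : t ≤ c2
        · have hπt : π t = μ (t - 8*δ) := hπ2 t ⟨le_of_not_ge ht1, ht2⟩
          have hut : dist u (π t) = t - 8*δ := by
            rw [hπt]
            have h5 := hμ.2.2 0 ⟨le_refl 0, dist_nonneg⟩ (t - 8*δ)
              ⟨by linarith [le_of_not_ge ht1], by linarith⟩
            rw [hμ.1] at h5
            rw [h5, zero_sub, abs_neg, abs_of_nonneg (by linarith [le_of_not_ge ht1])]
          by_cases hTS : T = S₀
          · subst hTS
            have hmemS0 : π t ∈ T := interior_subset hint
            linarith [hu_far (π t) hmemS0, hut, hduv]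
          · have hmemT : π t ∈ T := interior_subset hint
            have hfar3 : R ≤ dist (π t) px := hSig.far T hT S₀ hS₀ hTS _ hmemT px hpx
            linarith [dist_triangle (π t) u px, dist_comm u (π t), hupx, hduv, hut]
        · have hπt : π t = γc (s' - (t - c2)) := hπ3 t ⟨le_of_not_ge ht2, ht.2⟩
          have hσI : s' - (t - c2) ∈ Set.Icc 0 (dist py y) :=
            hσmem t ⟨le_of_not_ge ht2, ht.2⟩
          have hpyt : dist (π t) py = s' - (t - c2) := by
            rw [hπt]
            have h5 := hγc.2.2 (s' - (t - c2)) hσI 0 ⟨le_refl 0, dist_nonneg⟩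
            rw [hγc.1] at h5
            rw [h5, sub_zero, abs_of_nonneg hσI.1]
          by_cases hTS : T = S₀
          · subst hTS
            rcases eq_or_lt_of_le hσI.1 with h0 | h0
            · have hpt : π t = py := by rw [hπt, ← h0, hγc.1]
              exact not_interior_of_proj' hgeo hpy hpyd (by linarith)
                (by rwa [hpt] at hint)
            · have hmemS0 : π t ∈ T := interior_subset hint
              have h6 : Metric.infDist y T ≤ dist y (π t) :=
                Metric.infDist_le_dist_of_mem hmemS0
              have hyt : dist y (π t) = dist py y - (s' - (t - c2)) := by
                rw [hπt]
                have h5 := hγc.2.2 (s' - (t - c2)) hσI (dist py y)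
                  ⟨dist_nonneg, le_refl _⟩
                rw [hγc.2.1] at h5
                rw [dist_comm y _, h5, abs_of_nonpos (by linarith [hσI.2]), neg_sub]
              rw [← hpyd] at h6
              linarith [dist_comm py y]
          · have hmemT : π t ∈ T := interior_subset hint
            have hfar3 : R ≤ dist (π t) py := hSig.far T hT S₀ hS₀ hTS _ hmemT py hpy
            linarith [hpyt, hds', not_le.mp ht2]
    have hπ0 : π 0 = px := by
      rw [hπ1 0 ⟨le_refl 0, by linarith⟩, hγ3.1]
    have hπB : π B = py := by
      rw [hπ3 B ⟨hc2B, le_refl B⟩, show s' - (B - c2) = 0 by linarith, hγc.1]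
    have hvar : eVariationOn π (Set.Icc 0 B) ≤
        ENNReal.ofReal ((2 * ε + 12 * δ) + 16 * δ) := by
      have h1 : eVariationOn π (Set.Icc 0 B) ≤
          eVariationOn (id : ℝ → ℝ) (Set.Icc 0 B) := by
        have h2 := hlipOn.comp_eVariationOn_le
          (g := (id : ℝ → ℝ)) (s := Set.Icc 0 B) (fun z hz => hz)
        simpa using h2
      have h3 : eVariationOn (id : ℝ → ℝ) (Set.Icc 0 B) ≤ ENNReal.ofReal (B - 0) := by
        have hm : MonotoneOn (id : ℝ → ℝ) (Set.Icc 0 B) := fun _ _ _ _ h => h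
        have h4 := hm.eVariationOn_le (a := 0) (b := B) ⟨le_refl 0, hB0⟩
          ⟨hB0, le_refl B⟩
        simpa [Set.inter_self] using h4
      calc eVariationOn π (Set.Icc 0 B)
          ≤ eVariationOn (id : ℝ → ℝ) (Set.Icc 0 B) := h1
        _ ≤ ENNReal.ofReal (B - 0) := h3
        _ ≤ ENNReal.ofReal ((2 * ε + 12 * δ) + 16 * δ) :=
            ENNReal.ofReal_le_ofReal (by linarith [hds', hduv])
    refine le_trans ?_ hvar
    exact iInf_le_of_le π <| iInf_le_of_le B <| iInf_le_of_le hB0 <|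
      iInf_le_of_le hlipOn.continuousOn <| iInf_le_of_le hπ0 <|
      iInf_le_of_le hπB <| iInf_le_of_le hmemXS (le_refl _)
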